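/- For every u ∈ ℝ^d, the identity ∑_{g∈G} exp(−½‖y − gθ*‖²) · ⟨y − gθ*, gu⟩ = 0 holds for all y ∈ ℝ^d if and only if H̄u = 0. -/

import Mathlib

open scoped BigOperators RealInnerProductSpace

noncomputable section

abbrev Euc (d : ℕ) := EuclideanSpace ℝ (Fin d)
abbrev Iso (d : ℕ) := Euc d ≃ₗᵢ[ℝ] Euc d

/-- The average `H̄ = (1/|H|) ∑_{h∈H} h` of a finite subgroup of linear isometries. -/
def groupAvg {d : ℕ} (H : Subgroup (Iso d)) [Fintype H] : Euc d →ₗ[ℝ] Euc d :=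
  (Fintype.card H : ℝ)⁻¹ • ∑ h : H, ((h : Iso d).toLinearEquiv : Euc d →ₗ[ℝ] Euc d)

open Real Filter Topology Finset

lemma score_key {d : ℕ} (g : Iso d) (θ z u : Euc d) (t : ℝ) :
    Real.exp ((1/2) * ‖(t • θ + z) - θ‖ ^ 2) *
      (Real.exp (-(1 / 2) * ‖(t • θ + z) - g θ‖ ^ 2) * ⟪(t • θ + z) - g θ, g u⟫)
    = Real.exp (-(t * (‖θ‖ ^ 2 - ⟪θ, g θ⟫)) + ⟪z, g θ - θ⟫) *
        (t * ⟪θ, g u⟫ + ⟪z - g θ, g u⟫) := by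
  rw [← mul_assoc, ← Real.exp_add]
  congr 1
  · congr 1
    simp only [norm_sub_sq_real, inner_add_left, real_inner_smul_left, inner_sub_left,
      inner_sub_right, g.norm_map, real_inner_self_eq_norm_sq]
    ring
  · simp only [inner_add_left, real_inner_smul_left, inner_sub_left]
    ring

lemma score_decay (b k c e : ℝ) (hb : 0 < b) :
    Tendsto (fun t : ℝ => Real.exp (-(t * b) + k) * (t * c + e)) atTop (𝓝 0) := by
  have h1 : Tendsto (fun t : ℝ => b * t) atTop atTop := tendsto_id.const_mul_atTop hb
  have h2 : Tendsto (fun t : ℝ => (b * t) * Real.exp (-(b * t))) atTop (𝓝 0) := by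
    have := (tendsto_pow_mul_exp_neg_atTop_nhds_zero 1).comp h1
    simpa [Function.comp_def] using this
  have h3 : Tendsto (fun t : ℝ => Real.exp (-(b * t))) atTop (𝓝 0) :=
    tendsto_exp_neg_atTop_nhds_zero.comp h1
  have heq : (fun t : ℝ => Real.exp (-(t * b) + k) * (t * c + e))
      = fun t : ℝ => Real.exp k * ((c / b) * ((b * t) * Real.exp (-(b * t)))
          + e * Real.exp (-(b * t))) := by
    funext t
    rw [show -(t * b) + k = k + -(b * t) by ring, Real.exp_add]
    field_simp
  rw [heq]
  simpa using (((h2.const_mul (c / b)).add (h3.const_mul e)).const_mul (Real.exp k))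

/-- `∑_{g∈G} exp(-½‖y-gθ*‖²) ⟨y-gθ*, gu⟩ = 0` for all `y` iff `H̄u = 0`. -/
theorem score_vanishes_iff {d : ℕ} (G : Subgroup (Iso d)) [Fintype G] (θstar : Euc d)
    (H : Subgroup (Iso d)) [Fintype H]
    (hH : ∀ g : Iso d, g ∈ H ↔ g ∈ G ∧ g θstar = θstar)
    (u : Euc d) :
    (∀ y : Euc d,
        ∑ g : G, Real.exp (-(1 / 2) * ‖y - (g : Iso d) θstar‖ ^ 2) *
          ⟪y - (g : Iso d) θstar, (g : Iso d) u⟫ = 0) ↔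
      groupAvg H u = 0 := by
  classical
  set v : Euc d := ∑ h : H, (h : Iso d) u with hv
  have hcard : (Fintype.card H : ℝ) ≠ 0 := Nat.cast_ne_zero.mpr Fintype.card_ne_zero
  have havg : groupAvg H u = (Fintype.card H : ℝ)⁻¹ • v := by
    simp [groupAvg, LinearMap.sum_apply, hv]
  have hiff : groupAvg H u = 0 ↔ v = 0 := by
    rw [havg, smul_eq_zero]
    simp [hcard]
  rw [hiff]
  -- sum over "fixers" in G equals sum over H
  have hfixsum : ∀ w : Iso d → Euc d,
      ∑ g ∈ univ.filter (fun g : G => (g : Iso d) θstar = θstar), w (g : Iso d)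
        = ∑ h : H, w (h : Iso d) := by
    intro w
    refine Finset.sum_bij (fun (a : G) ha => (⟨(a : Iso d),
        (hH a).mpr ⟨a.2, (Finset.mem_filter.mp ha).2⟩⟩ : H)) (fun a ha => Finset.mem_univ _)
      ?_ ?_ ?_
    · intro a ha b hb hab
      exact Subtype.ext (by simpa using hab)
    · intro h _
      refine ⟨⟨(h : Iso d), ((hH h).mp h.2).1⟩, ?_, rfl⟩
      exact Finset.mem_filter.mpr ⟨Finset.mem_univ _, ((hH h).mp h.2).2⟩
    · intro a ha
      rfl
  constructor
  · -- forward direction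
    intro hS
    have hzv : ∀ z : Euc d, ⟪z - θstar, v⟫ = 0 := by
      intro z
      set P : G → Prop := fun g => (g : Iso d) θstar = θstar with hP
      have key2 : ∀ t : ℝ, ∑ g : G,
          Real.exp (-(t * (‖θstar‖ ^ 2 - ⟪θstar, (g : Iso d) θstar⟫))
              + ⟪z, (g : Iso d) θstar - θstar⟫) *
            (t * ⟪θstar, (g : Iso d) u⟫ + ⟪z - (g : Iso d) θstar, (g : Iso d) u⟫) = 0 := by
        intro t
        have h0 := hS (t • θstar + z)
        calc ∑ g : G, Real.exp (-(t * (‖θstar‖ ^ 2 - ⟪θstar, (g : Iso d) θstar⟫))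
              + ⟪z, (g : Iso d) θstar - θstar⟫) *
            (t * ⟪θstar, (g : Iso d) u⟫ + ⟪z - (g : Iso d) θstar, (g : Iso d) u⟫)
            = ∑ g : G, Real.exp ((1/2) * ‖(t • θstar + z) - θstar‖ ^ 2) *
                (Real.exp (-(1 / 2) * ‖(t • θstar + z) - (g : Iso d) θstar‖ ^ 2) *
                  ⟪(t • θstar + z) - (g : Iso d) θstar, (g : Iso d) u⟫) :=
            Finset.sum_congr rfl fun g _ => (score_key (g : Iso d) θstar z u t).symm
          _ = Real.exp ((1/2) * ‖(t • θstar + z) - θstar‖ ^ 2) *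
              ∑ g : G, Real.exp (-(1 / 2) * ‖(t • θstar + z) - (g : Iso d) θstar‖ ^ 2) *
                ⟪(t • θstar + z) - (g : Iso d) θstar, (g : Iso d) u⟫ := by
            rw [Finset.mul_sum]
          _ = 0 := by rw [h0, mul_zero]
      set C : ℝ := ∑ g ∈ univ.filter P, ⟪θstar, (g : Iso d) u⟫ with hC
      set D : ℝ := ∑ g ∈ univ.filter P, ⟪z - (g : Iso d) θstar, (g : Iso d) u⟫ with hD
      have hsplit : ∀ t : ℝ, t * C + D
          = - ∑ g ∈ univ.filter (fun g => ¬ P g),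
              Real.exp (-(t * (‖θstar‖ ^ 2 - ⟪θstar, (g : Iso d) θstar⟫))
                  + ⟪z, (g : Iso d) θstar - θstar⟫) *
                (t * ⟪θstar, (g : Iso d) u⟫ + ⟪z - (g : Iso d) θstar, (g : Iso d) u⟫) := by
        intro t
        have h1 := key2 t
        rw [← Finset.sum_filter_add_sum_filter_not Finset.univ P] at h1
        have h2 : ∑ g ∈ univ.filter P,
            Real.exp (-(t * (‖θstar‖ ^ 2 - ⟪θstar, (g : Iso d) θstar⟫))
                + ⟪z, (g : Iso d) θstar - θstar⟫) *
              (t * ⟪θstar, (g : Iso d) u⟫ + ⟪z - (g : Iso d) θstar, (g : Iso d) u⟫)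
            = t * C + D := by
          rw [hC, hD, Finset.mul_sum, ← Finset.sum_add_distrib]
          refine Finset.sum_congr rfl fun g hg => ?_
          have hg' : (g : Iso d) θstar = θstar := (Finset.mem_filter.mp hg).2
          rw [hg', real_inner_self_eq_norm_sq]
          simp
        rw [h2] at h1
        linarith
      have hb : ∀ g : G, g ∈ univ.filter (fun g => ¬ P g) →
          0 < ‖θstar‖ ^ 2 - ⟪θstar, (g : Iso d) θstar⟫ := by
        intro g hg
        have hne : θstar - (g : Iso d) θstar ≠ 0 := by
          intro hcon
          exact (Finset.mem_filter.mp hg).2 (sub_eq_zero.mp hcon).symm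
        have hpos : 0 < ‖θstar - (g : Iso d) θstar‖ ^ 2 :=
          pow_pos (norm_pos_iff.mpr hne) 2
        have hexp : ‖θstar - (g : Iso d) θstar‖ ^ 2
            = 2 * (‖θstar‖ ^ 2 - ⟪θstar, (g : Iso d) θstar⟫) := by
          rw [norm_sub_sq_real, (g : Iso d).norm_map]
          ring
        linarith [hexp ▸ hpos]
      have hR : Tendsto (fun t : ℝ => ∑ g ∈ univ.filter (fun g => ¬ P g),
          Real.exp (-(t * (‖θstar‖ ^ 2 - ⟪θstar, (g : Iso d) θstar⟫))
              + ⟪z, (g : Iso d) θstar - θstar⟫) *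
            (t * ⟪θstar, (g : Iso d) u⟫ + ⟪z - (g : Iso d) θstar, (g : Iso d) u⟫))
          atTop (𝓝 0) := by
        have := tendsto_finset_sum (univ.filter (fun g : G => ¬ P g))
          (fun g hg => score_decay _ (⟪z, (g : Iso d) θstar - θstar⟫)
            (⟪θstar, (g : Iso d) u⟫) (⟪z - (g : Iso d) θstar, (g : Iso d) u⟫) (hb g hg))
        simpa using this
      have hlin : Tendsto (fun t : ℝ => t * C + D) atTop (𝓝 0) := by
        have := hR.neg
        rw [neg_zero] at this
        exact this.congr fun t => (hsplit t).symm
      have hC0 : C = 0 := by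
        have l1 : Tendsto (fun t : ℝ => (t + 1) * C + D) atTop (𝓝 0) :=
          hlin.comp (tendsto_atTop_add_const_right _ 1 tendsto_id)
        have l2 : Tendsto (fun _ : ℝ => C) atTop (𝓝 0) := by
          have := l1.sub hlin
          rw [sub_zero] at this
          exact this.congr fun t => by ring
        exact tendsto_nhds_unique tendsto_const_nhds l2
      have hD0 : D = 0 := by
        have : Tendsto (fun _ : ℝ => D) atTop (𝓝 0) :=
          hlin.congr fun t => by rw [hC0]; ring
        exact tendsto_nhds_unique tendsto_const_nhds this
      have hDv : D = ⟪z - θstar, v⟫ := by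
        rw [hD]
        calc ∑ g ∈ univ.filter P, ⟪z - (g : Iso d) θstar, (g : Iso d) u⟫
            = ∑ g ∈ univ.filter P, ⟪z - θstar, (g : Iso d) u⟫ :=
            Finset.sum_congr rfl fun g hg => by rw [(Finset.mem_filter.mp hg).2]
          _ = ⟪z - θstar, ∑ g ∈ univ.filter P, (g : Iso d) u⟫ := (inner_sum _ _ _).symm
          _ = ⟪z - θstar, v⟫ := by rw [hfixsum (fun g => g u), hv]
      rw [← hDv]
      exact hD0
    have h0 := hzv (θstar + v)
    have : ⟪v, v⟫ = (0 : ℝ) := by simpa using h0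
    exact inner_self_eq_zero.mp this
  · -- reverse direction
    intro hv0 y
    have hre : ∀ h : H, ∑ g : G, Real.exp (-(1 / 2) * ‖y - (g : Iso d) θstar‖ ^ 2) *
          ⟪y - (g : Iso d) θstar, (g : Iso d) u⟫
        = ∑ g : G, Real.exp (-(1 / 2) * ‖y - (g : Iso d) θstar‖ ^ 2) *
          ⟪y - (g : Iso d) θstar, (g : Iso d) ((h : Iso d) u)⟫ := by
      intro h
      have hG : (h : Iso d) ∈ G := ((hH h).mp h.2).1
      have hfix : (h : Iso d) θstar = θstar := ((hH h).mp h.2).2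
      refine (Fintype.sum_equiv (Equiv.mulRight (⟨(h : Iso d), hG⟩ : G)) _ _ fun g => ?_).symm
      have hθ : ((g * (⟨(h : Iso d), hG⟩ : G) : G) : Iso d) θstar = (g : Iso d) θstar := by
        simp [hfix]
      have hu : ((g * (⟨(h : Iso d), hG⟩ : G) : G) : Iso d) u = (g : Iso d) ((h : Iso d) u) := by
        simp
      simp only [Equiv.coe_mulRight]
      rw [hθ, hu]
    have hsum : ∑ _h : H, (∑ g : G, Real.exp (-(1 / 2) * ‖y - (g : Iso d) θstar‖ ^ 2) *
        ⟪y - (g : Iso d) θstar, (g : Iso d) u⟫) = 0 := by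
      calc ∑ h : H, (∑ g : G, Real.exp (-(1 / 2) * ‖y - (g : Iso d) θstar‖ ^ 2) *
            ⟪y - (g : Iso d) θstar, (g : Iso d) u⟫)
          = ∑ h : H, ∑ g : G, Real.exp (-(1 / 2) * ‖y - (g : Iso d) θstar‖ ^ 2) *
            ⟪y - (g : Iso d) θstar, (g : Iso d) ((h : Iso d) u)⟫ :=
          Finset.sum_congr rfl fun h _ => hre h
        _ = ∑ g : G, ∑ h : H, Real.exp (-(1 / 2) * ‖y - (g : Iso d) θstar‖ ^ 2) *
            ⟪y - (g : Iso d) θstar, (g : Iso d) ((h : Iso d) u)⟫ := Finset.sum_comm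
        _ = ∑ g : G, Real.exp (-(1 / 2) * ‖y - (g : Iso d) θstar‖ ^ 2) *
            ⟪y - (g : Iso d) θstar, (g : Iso d) v⟫ := by
          refine Finset.sum_congr rfl fun g _ => ?_
          rw [← Finset.mul_sum, ← inner_sum, hv, map_sum]
        _ = 0 := by simp [hv0]
    rw [Finset.sum_const, nsmul_eq_mul] at hsum
    have hcard' : ((Finset.univ : Finset H).card : ℝ) ≠ 0 := by
      simpa only [Finset.card_univ] using hcard
    exact (mul_eq_zero.mp hsum).resolve_left hcard'
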